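/- Let S be a spanning (n,r,s) system, i.e., a multiset of n lines in PG(r-1,2) such that each hyperplane contains at most s elements of S, some hyperplane contains exactly s, and s < n. Let P(S) be the multiset of 3n points obtained by replacing each line by its three points. Then the binary linear code corresponding to P(S) is a 2-divisible [3n, r, 2(n-s)]_2 code whose maximum codeword weight is at most 2n. -/

import Mathlib

/-- The ambient vector space `F_2^r`. -/
abbrev Vec (r : ℕ) := Fin r → ZMod 2

/-- A line of `PG(r-1,2)`: a 2-dimensional subspace of `F_2^r`. -/
def isLine {r : ℕ} (L : Submodule (ZMod 2) (Vec r)) : Prop :=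
  Module.finrank (ZMod 2) L = 2

/-- A point of `PG(r-1,2)`: a 1-dimensional subspace of `F_2^r`. -/
def isPoint {r : ℕ} (P : Submodule (ZMod 2) (Vec r)) : Prop :=
  Module.finrank (ZMod 2) P = 1

/-- A hyperplane of `PG(r-1,2)`: an `(r-1)`-dimensional subspace of `F_2^r`. -/
def isHyperplane {r : ℕ} (H : Submodule (ZMod 2) (Vec r)) : Prop :=
  Module.finrank (ZMod 2) H = r - 1

open scoped Classical in
/-- The number of members of the multiset `S` (of lines) contained in the subspace `H`. -/
noncomputable def linesIn {r : ℕ} (S : Multiset (Submodule (ZMod 2) (Vec r)))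
    (H : Submodule (ZMod 2) (Vec r)) : ℕ :=
  Multiset.card (S.filter (fun L => L ≤ H))

/-- An `(n,r,s)` system: a multiset of `n` lines of `PG(r-1,2)` such that every hyperplane
contains at most `s` of them and some hyperplane contains exactly `s` of them. -/
def IsSystem (r n s : ℕ) (S : Multiset (Submodule (ZMod 2) (Vec r))) : Prop :=
  Multiset.card S = n ∧ (∀ L ∈ S, isLine L) ∧
    (∀ H, isHyperplane H → linesIn S H ≤ s) ∧
    (∃ H, isHyperplane H ∧ linesIn S H = s)


open scoped Classical in
/-- The multiset of the three nonzero vectors (= points) of a line `L`. -/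
noncomputable def pointsOf {r : ℕ} (L : Submodule (ZMod 2) (Vec r)) : Multiset (Vec r) :=
  (Finset.univ.filter (fun v : Vec r => v ∈ L ∧ v ≠ 0)).val

/-- The multiset `P(S)` of points obtained by replacing each line of `S` by its three points. -/
noncomputable def pointMultiset {r : ℕ} (S : Multiset (Submodule (ZMod 2) (Vec r))) :
    Multiset (Vec r) :=
  S.bind pointsOf

/-- The binary linear code whose generator matrix has the vectors `pts j` as columns. -/
noncomputable def codeOf {r m : ℕ} (pts : Fin m → Vec r) :
    Submodule (ZMod 2) (Fin m → ZMod 2) :=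
  LinearMap.range (Matrix.mulVecLin (Matrix.of fun j i => pts j i))

/-! ### Auxiliary material -/

open Module
open scoped Classical

/-- The linear functional `v ↦ ∑ i, v i * x i`. -/
noncomputable def phiF {r : ℕ} (x : Vec r) : Vec r →ₗ[ZMod 2] ZMod 2 where
  toFun v := ∑ i, v i * x i
  map_add' a b := by simp [add_mul, Finset.sum_add_distrib]
  map_smul' c v := by simp [Finset.mul_sum, mul_assoc]

lemma phiF_apply {r : ℕ} (x v : Vec r) : phiF x v = ∑ i, v i * x i := rfl

lemma phiF_single {r : ℕ} (x : Vec r) (i : Fin r) : phiF x (Pi.single i 1) = x i := by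
  simp [phiF_apply, Pi.single_apply]

lemma zmod2_ne (a : ZMod 2) : a ≠ 0 ↔ a = 1 := by revert a; decide

lemma card_filter_mem {r : ℕ} (W : Submodule (ZMod 2) (Vec r)) :
    (Finset.univ.filter (fun v : Vec r => v ∈ W)).card = 2 ^ finrank (ZMod 2) W := by
  have h : Fintype.card W = 2 ^ finrank (ZMod 2) W := by
    have := card_eq_pow_finrank (K := ZMod 2) (V := W)
    simpa using this
  rw [← h, Fintype.card_subtype]

lemma finrank_inf_ker {r : ℕ} (L : Submodule (ZMod 2) (Vec r))
    (hL : finrank (ZMod 2) L = 2) (f : Vec r →ₗ[ZMod 2] ZMod 2)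
    (hnle : ¬ L ≤ LinearMap.ker f) :
    finrank (ZMod 2) (L ⊓ LinearMap.ker f : Submodule (ZMod 2) (Vec r)) = 1 := by
  set ψ : L →ₗ[ZMod 2] ZMod 2 := f.comp L.subtype with hψ
  obtain ⟨w, hwL, hw⟩ := SetLike.not_le_iff_exists.mp hnle
  have hψne : ψ ≠ 0 := by
    intro h0
    exact hw (by simpa [hψ] using congrFun (congrArg DFunLike.coe h0) ⟨w, hwL⟩)
  have hrange : finrank (ZMod 2) (LinearMap.range ψ) = 1 := by
    have hle : finrank (ZMod 2) (LinearMap.range ψ) ≤ 1 := by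
      simpa using Submodule.finrank_le (LinearMap.range ψ)
    have hne : LinearMap.range ψ ≠ ⊥ := by
      exact fun h => hψne (LinearMap.range_eq_bot.mp h)
    have hpos : finrank (ZMod 2) (LinearMap.range ψ) ≠ 0 := by
      exact fun h => hne (Submodule.finrank_eq_zero.mp h)
    omega
  have hrn := LinearMap.finrank_range_add_finrank_ker ψ
  rw [hL, hrange] at hrn
  have hker : finrank (ZMod 2) (LinearMap.ker ψ) = 1 := by omega
  have hkc : LinearMap.ker ψ = Submodule.comap L.subtype (LinearMap.ker f) := by
    simp [hψ, LinearMap.ker_comp]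
  have hmap : Submodule.map L.subtype (LinearMap.ker ψ) = L ⊓ LinearMap.ker f := by
    rw [hkc, Submodule.map_comap_subtype]
  rw [← hmap, Submodule.finrank_map_subtype_eq]
  exact hker

lemma countP_pointsOf {r : ℕ} (L : Submodule (ZMod 2) (Vec r))
    (hL : finrank (ZMod 2) L = 2) (f : Vec r →ₗ[ZMod 2] ZMod 2) :
    Multiset.countP (fun v => f v ≠ 0) (pointsOf L) =
      if L ≤ LinearMap.ker f then 0 else 2 := by
  have hcnt : Multiset.countP (fun v => f v ≠ 0) (pointsOf L) =
      (Finset.univ.filter (fun v : Vec r => v ∈ L ∧ f v = 1)).card := by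
    rw [pointsOf, Multiset.countP_eq_card_filter, ← Finset.filter_val, Finset.filter_filter]
    have hfe : (Finset.filter (fun a : Vec r => (a ∈ L ∧ a ≠ 0) ∧ f a ≠ 0) Finset.univ) =
        Finset.filter (fun v => v ∈ L ∧ f v = 1) Finset.univ := by
      apply Finset.filter_congr
      intro v _
      constructor
      · rintro ⟨⟨h1, _⟩, h3⟩; exact ⟨h1, (zmod2_ne _).mp h3⟩
      · rintro ⟨h1, h2⟩
        refine ⟨⟨h1, ?_⟩, (zmod2_ne _).mpr h2⟩
        rintro rfl; simp at h2
    rw [hfe]; rfl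
  rw [hcnt]
  by_cases hle : L ≤ LinearMap.ker f
  · rw [if_pos hle]
    rw [Finset.card_eq_zero, Finset.filter_eq_empty_iff]
    rintro v _ ⟨h1, h2⟩
    have : f v = 0 := hle h1
    rw [this] at h2
    exact one_ne_zero h2.symm
  · rw [if_neg hle]
    have h4 : (Finset.univ.filter (fun v : Vec r => v ∈ L)).card = 4 := by
      rw [card_filter_mem, hL]; norm_num
    have h0 : (Finset.univ.filter (fun v : Vec r => v ∈ L ∧ f v = 0)).card = 2 := by
      have heq : (Finset.univ.filter (fun v : Vec r => v ∈ L ∧ f v = 0)) =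
          (Finset.univ.filter (fun v : Vec r =>
            v ∈ (L ⊓ LinearMap.ker f : Submodule (ZMod 2) (Vec r)))) := by
        apply Finset.filter_congr
        intro v _
        simp [Submodule.mem_inf, LinearMap.mem_ker]
      rw [heq, card_filter_mem, finrank_inf_ker L hL f hle]; norm_num
    have hsplit := Finset.card_filter_add_card_filter_not
      (s := Finset.univ.filter (fun v : Vec r => v ∈ L)) (p := fun v => f v = 0)
    rw [Finset.filter_filter, Finset.filter_filter] at hsplit
    have he2 : (Finset.univ.filter (fun v : Vec r => v ∈ L ∧ ¬ f v = 0)) =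
        (Finset.univ.filter (fun v : Vec r => v ∈ L ∧ f v = 1)) := by
      apply Finset.filter_congr
      intro v _
      exact and_congr_right fun _ => zmod2_ne _
    rw [he2, h4, h0] at hsplit
    omega

lemma countP_bind' {α β : Type*} (p : β → Prop) [DecidablePred p]
    (s : Multiset α) (f : α → Multiset β) :
    Multiset.countP p (s.bind f) = (s.map (fun a => Multiset.countP p (f a))).sum := by
  induction s using Multiset.induction_on with
  | empty => simp
  | cons a s ih => simp [Multiset.cons_bind, Multiset.countP_add, ih]

lemma sum_map_ite {α : Type*} (p : α → Prop) [DecidablePred p] (s : Multiset α) :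
    (s.map (fun a => if p a then 0 else 2)).sum =
      2 * (Multiset.card s - Multiset.card (s.filter p)) := by
  induction s using Multiset.induction_on with
  | empty => simp
  | cons a s ih =>
    have hle : Multiset.card (s.filter p) ≤ Multiset.card s :=
      Multiset.card_le_card (Multiset.filter_le p s)
    by_cases h : p a <;>
      simp [Multiset.filter_cons, h, ih] <;> omega

lemma ker_phiF_hyperplane {r : ℕ} (x : Vec r) (hx : x ≠ 0) :
    isHyperplane (LinearMap.ker (phiF x)) := by
  rw [isHyperplane]
  have hphi : phiF x ≠ 0 := by
    obtain ⟨i, hi⟩ := Function.ne_iff.mp hx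
    intro h0
    apply hi
    have := phiF_single x i
    rw [h0] at this
    simpa using this.symm
  have hrange : finrank (ZMod 2) (LinearMap.range (phiF x)) = 1 := by
    have hle : finrank (ZMod 2) (LinearMap.range (phiF x)) ≤ 1 := by
      simpa using Submodule.finrank_le (LinearMap.range (phiF x))
    have hne : LinearMap.range (phiF x) ≠ ⊥ := by
      exact fun h => hphi (LinearMap.range_eq_bot.mp h)
    have hpos : finrank (ZMod 2) (LinearMap.range (phiF x)) ≠ 0 := by
      exact fun h => hne (Submodule.finrank_eq_zero.mp h)
    omega
  have hrn := LinearMap.finrank_range_add_finrank_ker (phiF x)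
  rw [hrange, Module.finrank_fin_fun] at hrn
  omega

lemma exists_phiF_ker {r : ℕ} (hr : 1 ≤ r) (H : Submodule (ZMod 2) (Vec r))
    (hH : isHyperplane H) :
    ∃ x : Vec r, x ≠ 0 ∧ LinearMap.ker (phiF x) = H := by
  rw [isHyperplane] at hH
  have hq : finrank (ZMod 2) (Vec r ⧸ H) = 1 := by
    have := Submodule.finrank_quotient_add_finrank H
    rw [hH, Module.finrank_fin_fun] at this
    omega
  obtain ⟨e⟩ := FiniteDimensional.nonempty_linearEquiv_of_finrank_eq
    (R := ZMod 2) (M := Vec r ⧸ H) (M' := ZMod 2) (by rw [hq, finrank_self])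
  set f : Vec r →ₗ[ZMod 2] ZMod 2 := e.toLinearMap ∘ₗ H.mkQ with hf
  have hkf : LinearMap.ker f = H := by
    rw [hf, LinearMap.ker_comp, LinearEquiv.ker, Submodule.comap_bot, Submodule.ker_mkQ]
  set x : Vec r := fun i => f (Pi.single i 1) with hxdef
  have hpx : phiF x = f := by
    apply LinearMap.ext
    intro v
    rw [phiF_apply]
    conv_rhs => rw [← Finset.univ_sum_single v]
    rw [map_sum]
    apply Finset.sum_congr rfl
    intro i _
    have hps : Pi.single i (v i) = v i • (Pi.single i 1 : Vec r) := by
      rw [← Pi.single_smul, smul_eq_mul, mul_one]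
    rw [hps, map_smul, smul_eq_mul, hxdef]
  refine ⟨x, ?_, by rw [hpx, hkf]⟩
  intro h0
  rw [h0] at hpx
  have : LinearMap.ker f = ⊤ := by
    rw [← hpx]
    apply LinearMap.ker_eq_top.mpr
    ext v
    simp [phiF_apply]
  rw [hkf] at this
  rw [this, finrank_top, Module.finrank_fin_fun] at hH
  omega

lemma weight_eq {r n : ℕ} (S : Multiset (Submodule (ZMod 2) (Vec r)))
    (hlines : ∀ L ∈ S, isLine L) (hcard : Multiset.card S = n)
    (pts : Fin (3 * n) → Vec r)
    (hpts : (Finset.univ.val : Multiset (Fin (3 * n))).map pts = pointMultiset S)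
    (x : Vec r) :
    hammingNorm ((Matrix.of fun j i => pts j i).mulVecLin x) =
      2 * (n - linesIn S (LinearMap.ker (phiF x))) := by
  set c := (Matrix.of fun j i => pts j i).mulVecLin x with hc
  have happ : ∀ j, c j = phiF x (pts j) := by
    intro j
    simp [hc, Matrix.mulVecLin_apply, Matrix.mulVec, dotProduct, phiF_apply]
  calc hammingNorm c
      = (Finset.filter (fun j => phiF x (pts j) ≠ 0) Finset.univ).card := by
        show (Finset.filter (fun j => c j ≠ 0) Finset.univ).card = _
        exact congrArg Finset.card (Finset.filter_congr fun j _ => by rw [happ j])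
    _ = Multiset.countP (fun v : Vec r => phiF x v ≠ 0)
          (Multiset.map pts Finset.univ.val) := by
        rw [Multiset.countP_map]; rfl
    _ = Multiset.countP (fun v : Vec r => phiF x v ≠ 0) (pointMultiset S) := by rw [hpts]
    _ = (S.map (fun L => Multiset.countP (fun v : Vec r => phiF x v ≠ 0) (pointsOf L))).sum :=
        countP_bind' _ _ _
    _ = (S.map (fun L => if L ≤ LinearMap.ker (phiF x) then 0 else 2)).sum := by
        apply congrArg Multiset.sum
        apply Multiset.map_congr rfl
        intro L hL
        exact countP_pointsOf L (hlines L hL) _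
    _ = 2 * (Multiset.card S -
          Multiset.card (S.filter (fun L => L ≤ LinearMap.ker (phiF x)))) :=
        sum_map_ite _ _
    _ = 2 * (n - linesIn S (LinearMap.ker (phiF x))) := by
        rw [hcard]; rfl

/-- If `S` is a spanning `(n,r,s)` system, then the binary linear code corresponding to
`P(S)` is a `2`-divisible `[3n, r, 2(n-s)]_2` code with maximum weight at most `2n`. -/
theorem system_code_parameters {r n s : ℕ}
    (S : Multiset (Submodule (ZMod 2) (Vec r)))
    (hS : IsSystem r n s S) (hspan : s < n)
    (pts : Fin (3 * n) → Vec r)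
    (hpts : (Finset.univ.val : Multiset (Fin (3 * n))).map pts = pointMultiset S) :
    Module.finrank (ZMod 2) (codeOf pts) = r ∧
    (∀ c ∈ codeOf pts, 2 ∣ hammingNorm c) ∧
    (∀ c ∈ codeOf pts, c ≠ 0 → 2 * (n - s) ≤ hammingNorm c) ∧
    (∃ c ∈ codeOf pts, c ≠ 0 ∧ hammingNorm c = 2 * (n - s)) ∧
    (∀ c ∈ codeOf pts, hammingNorm c ≤ 2 * n) := by
  obtain ⟨hcard, hlines, hmax, H₀, hH₀hyp, hH₀eq⟩ := hS
  have hn : 0 < n := Nat.pos_of_ne_zero (by omega)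
  obtain ⟨L₀, hL₀⟩ := Multiset.exists_mem_of_ne_zero
    (show S ≠ 0 by intro h; rw [h] at hcard; simp at hcard; omega)
  have hr2 : 2 ≤ r := by
    have h1 : finrank (ZMod 2) L₀ = 2 := hlines L₀ hL₀
    have h2 := Submodule.finrank_le L₀
    rw [Module.finrank_fin_fun, h1] at h2
    exact h2
  have key : ∀ x : Vec r,
      hammingNorm ((Matrix.of fun j i => pts j i).mulVecLin x) =
        2 * (n - linesIn S (LinearMap.ker (phiF x))) :=
    weight_eq S hlines hcard pts hpts
  have hbound : ∀ x : Vec r, x ≠ 0 → linesIn S (LinearMap.ker (phiF x)) ≤ s := fun x hx =>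
    hmax _ (ker_phiF_hyperplane x hx)
  have hne0 : ∀ x : Vec r, x ≠ 0 →
      (Matrix.of fun j i => pts j i).mulVecLin x ≠ 0 := by
    intro x hx h0
    have := key x
    rw [h0, hammingNorm_zero] at this
    have hb := hbound x hx
    omega
  have hinj : Function.Injective ((Matrix.of fun j i => pts j i).mulVecLin) := by
    rw [← LinearMap.ker_eq_bot]
    rw [Submodule.eq_bot_iff]
    intro x hxk
    by_contra hx
    exact hne0 x hx (LinearMap.mem_ker.mp hxk)
  refine ⟨?_, ?_, ?_, ?_, ?_⟩
  · rw [codeOf, LinearMap.finrank_range_of_inj hinj, Module.finrank_fin_fun]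
  · rintro c ⟨x, rfl⟩
    rw [key x]
    exact Dvd.intro _ rfl
  · rintro c ⟨x, rfl⟩ hc0
    have hx : x ≠ 0 := by rintro rfl; exact hc0 (map_zero _)
    rw [key x]
    have hb := hbound x hx
    have h1 : n - s ≤ n - linesIn S (LinearMap.ker (phiF x)) := by omega
    omega
  · obtain ⟨x, hx0, hxk⟩ := exists_phiF_ker (by omega) H₀ hH₀hyp
    refine ⟨(Matrix.of fun j i => pts j i).mulVecLin x, ⟨x, rfl⟩, hne0 x hx0, ?_⟩
    rw [key x, hxk, hH₀eq]
  · rintro c ⟨x, rfl⟩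
    rw [key x]
    omega
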